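/- arXiv:1411.7890 — 5 statements merged into one kernel-verified Lean document; each statement's English description precedes it below -/
import Mathlib

section
/- The map φ which assigns to each monomial u = x_1^{a_1}⋯x_n^{a_n} ∈ Mon(S∖I) the monomial prime ideal φ(u) = (x_{1,a_1+1}, …, x_{n,a_n+1}) ⊂ S^℘ is well defined (i.e., a_i + 1 ≤ b_i for all i) and establishes a bijection between Mon(S∖I) and the set Min(I^℘) of minimal prime ideals of I^℘. -/
open MvPolynomial

noncomputable section

/-- The vertex set / variable set `𝒮` of the polarized ring `S^℘`: pairs `⟨i, j⟩` with
`1 ≤ i ≤ n`, `1 ≤ j ≤ b i`.  Here `j : Fin (b i)` encodes the paper's second index `j + 1`,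
so the vertex `⟨i, j⟩` stands for the variable `x_{i, j+1}` of the paper. -/
abbrev PolVars (m : ℕ) (b : Fin m → ℕ) := Σ i : Fin m, Fin (b i)

/-- `I` is a monomial ideal, i.e. generated by monomials. -/
def IsMonomialIdeal {K : Type} [Field K] {m : ℕ} (I : Ideal (MvPolynomial (Fin m) K)) : Prop :=
  ∃ A : Set (Fin m →₀ ℕ), I = Ideal.span ((fun c => (monomial c (1 : K))) '' A)

/-- The exponent vectors of the minimal monomial generators of a monomial ideal:
the exponent vectors of monomials of `I` that are minimal under divisibility. -/
def MinGens (K : Type) [Field K] {m : ℕ} (I : Ideal (MvPolynomial (Fin m) K)) :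
    Set (Fin m →₀ ℕ) :=
  {c | (monomial c (1 : K)) ∈ I ∧ ∀ c' : Fin m →₀ ℕ, c' ≤ c → c' ≠ c →
      (monomial c' (1 : K)) ∉ I}

/-- The polarization `v^℘ = ∏_{i=1}^n ∏_{j=1}^{c_i} x_{i,j}` of the monomial `v = x^c`. -/
def polMon (K : Type) [Field K] {m : ℕ} (b : Fin m → ℕ) (c : Fin m →₀ ℕ) :
    MvPolynomial (PolVars m b) K :=
  ∏ v ∈ Finset.univ.filter (fun v : PolVars m b => (v.2 : ℕ) < c v.1), X v

/-- The polarization `I^℘ ⊆ S^℘` of the monomial ideal `I`, generated by the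
polarizations of the minimal monomial generators of `I`. -/
def polarIdeal (K : Type) [Field K] {m : ℕ} (b : Fin m → ℕ)
    (I : Ideal (MvPolynomial (Fin m) K)) : Ideal (MvPolynomial (PolVars m b) K) :=
  Ideal.span (polMon K b '' MinGens K I)

/-- The squarefree monomial `x_{1,a_1+1} ⋯ x_{n,a_n+1} ∈ S^℘` associated with the
exponent vector `a` of a monomial `x^a ∈ Mon(S∖I)`. -/
def genL (K : Type) [Field K] {m : ℕ} (b : Fin m → ℕ) (a : Fin m →₀ ℕ) :
    MvPolynomial (PolVars m b) K :=
  ∏ v ∈ Finset.univ.filter (fun v : PolVars m b => (v.2 : ℕ) = a v.1), X v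

/-- The ideal `L(I) ⊆ S^℘`, generated by the monomials `x_{1,a_1+1} ⋯ x_{n,a_n+1}`
with `x^a ∈ Mon(S∖I)`. -/
def LIdeal (K : Type) [Field K] {m : ℕ} (b : Fin m → ℕ)
    (I : Ideal (MvPolynomial (Fin m) K)) : Ideal (MvPolynomial (PolVars m b) K) :=
  Ideal.span (genL K b '' {a | (monomial a (1 : K)) ∉ I})

/-- The monomial prime ideal `φ(x^a) = (x_{1,a_1+1}, …, x_{n,a_n+1}) ⊆ S^℘`. -/
def phiIdeal (K : Type) [Field K] {m : ℕ} (b : Fin m → ℕ) (a : Fin m →₀ ℕ) :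
    Ideal (MvPolynomial (PolVars m b) K) :=
  Ideal.span ((fun v => (X v : MvPolynomial (PolVars m b) K)) ''
    {v : PolVars m b | (v.2 : ℕ) = a v.1})

/-- The set of faces of the simplicial complex `Δ(I)` on the vertex set `𝒮`, whose
Stanley–Reisner ideal is `I^℘`: a finite set `F` of vertices is a face iff the
squarefree monomial `∏_{v ∈ F} v` does not belong to `I^℘`. -/
def facesDelta (K : Type) [Field K] {m : ℕ} (b : Fin m → ℕ)
    (I : Ideal (MvPolynomial (Fin m) K)) : Set (Finset (PolVars m b)) :=
  {F | (∏ v ∈ F, (X v : MvPolynomial (PolVars m b) K)) ∉ polarIdeal K b I}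

/-- `F` is a facet (maximal face) of the simplicial complex (set of faces) `Δ`. -/
def IsFacetOf {V : Type} (Δ : Set (Finset V)) (F : Finset V) : Prop :=
  F ∈ Δ ∧ ∀ G ∈ Δ, F ⊆ G → F = G

/-- Zero-dimensionality data for a monomial ideal: `I` is a proper monomial ideal and,
for each `i`, `b i ≥ 1` is the smallest positive integer with `x_i^{b i} ∈ I`
(equivalently, `dim S/I = 0` with the `b i` minimal). -/
def ZeroDimData (K : Type) [Field K] {m : ℕ} (b : Fin m → ℕ)
    (I : Ideal (MvPolynomial (Fin m) K)) : Prop :=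
  IsMonomialIdeal I ∧ I ≠ ⊤ ∧ ∀ i : Fin m, 1 ≤ b i ∧
    (monomial (Finsupp.single i (b i)) (1 : K)) ∈ I ∧
    ∀ j : ℕ, j < b i → (monomial (Finsupp.single i j) (1 : K)) ∉ I

/-- The deletion `del_Δ(v) = {G ∈ Δ : v ∉ G}`. -/
def delC {V : Type} (Δ : Set (Finset V)) (v : V) : Set (Finset V) :=
  {G ∈ Δ | v ∉ G}

/-- The link `link_Δ(v) = {G ∈ Δ : v ∉ G and G ∪ {v} ∈ Δ}`. -/
def linkC {V : Type} [DecidableEq V] (Δ : Set (Finset V)) (v : V) : Set (Finset V) :=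
  {G ∈ Δ | v ∉ G ∧ insert v G ∈ Δ}

/-- Vertex decomposability of a simplicial complex (given as its set of faces):
`Δ` is vertex decomposable if it is a simplex, or it contains a vertex `v` such that
(i) every facet of `del_Δ(v)` is a facet of `Δ` (`v` is a shedding vertex), and
(ii) both `del_Δ(v)` and `link_Δ(v)` are vertex decomposable. -/
inductive IsVertexDecomposable {V : Type} [DecidableEq V] : Set (Finset V) → Prop
  | simplex (F : Finset V) : IsVertexDecomposable {G | G ⊆ F}
  | shed (Δ : Set (Finset V)) (v : V) (hv : {v} ∈ Δ)
      (hshed : ∀ F : Finset V, IsFacetOf (delC Δ v) F → IsFacetOf Δ F)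
      (hdel : IsVertexDecomposable (delC Δ v))
      (hlink : IsVertexDecomposable (linkC Δ v)) : IsVertexDecomposable Δ

/-- The vertex map replacing `x_{i₀,j}` by `x_{i₀,j-1}` and fixing all other vertices. -/
def shiftDown {m : ℕ} {b : Fin m → ℕ} (i₀ : Fin m) (v : PolVars m b) : PolVars m b :=
  ⟨v.1, ⟨(v.2 : ℕ) - (if v.1 = i₀ then 1 else 0),
    Nat.lt_of_le_of_lt (Nat.sub_le _ _) v.2.isLt⟩⟩

/-- `set(u)` for a generator `u = genL a` of `L(I)` with respect to the order `r`:
the set of variables `x` of `S^℘` such that `x·u` lies in the ideal generated by the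
generators of `L(I)` preceding `u`. -/
def setOfGen (K : Type) [Field K] {m : ℕ} (b : Fin m → ℕ)
    (I : Ideal (MvPolynomial (Fin m) K))
    (r : (Fin m →₀ ℕ) → (Fin m →₀ ℕ) → Prop) (a : Fin m →₀ ℕ) : Set (PolVars m b) :=
  {v | ∃ a' : Fin m →₀ ℕ, (monomial a' (1 : K)) ∉ I ∧ r a' a ∧ a' ≠ a ∧
      genL K b a' ∣ X v * genL K b a}

/-- `J(u,i)`: the weakly increasing sequence of the second indices of the variables
`x_{i,·}` dividing the monomial with exponent vector `e` (counted with multiplicity). -/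
def rowList {m : ℕ} {b : Fin m → ℕ} (e : PolVars m b →₀ ℕ) (i : Fin m) : List ℕ :=
  Multiset.sort (∑ j : Fin (b i), Multiset.replicate (e ⟨i, j⟩) (j : ℕ)) (· ≤ ·)

/-- Lexicographic (weak) order on sequences of natural numbers. -/
def lexLE (l l' : List ℕ) : Prop := l = l' ∨ List.Lex (· < ·) l l'

/-- The exponent vectors of the (minimal) monomial generators of `L(I)^k`:
products of `k` generators of `L(I)`. -/
def GLkE (K : Type) [Field K] {m : ℕ} (b : Fin m → ℕ)
    (I : Ideal (MvPolynomial (Fin m) K)) (k : ℕ) : Set (PolVars m b →₀ ℕ) :=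
  {e | ∃ f : Fin k → (Fin m →₀ ℕ), (∀ j, (monomial (f j) (1 : K)) ∉ I) ∧
      (monomial e (1 : K) : MvPolynomial (PolVars m b) K) = ∏ j, genL K b (f j)}

/-- The depth of a module `M` with respect to the ideal `J`: the maximal length of an
`M`-regular sequence consisting of elements of `J`. -/
def myDepth (R : Type) [CommRing R] (J : Ideal R) (M : Type) [AddCommGroup M]
    [Module R M] : ℕ :=
  sSup {k : ℕ | ∃ rs : List R, rs.length = k ∧ (∀ r ∈ rs, r ∈ J) ∧
      RingTheory.Sequence.IsRegular M rs}

/-- `max{deg lcm(u_1, …, u_k) : u_1, …, u_k ∈ Mon(S∖I)}`; the degree of the lcm of the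
monomials `x^{f 1}, …, x^{f k}` is `∑_i max_j (f j) i`. -/
def maxLcmDeg (K : Type) [Field K] {m : ℕ} (I : Ideal (MvPolynomial (Fin m) K))
    (k : ℕ) : ℕ :=
  sSup {d : ℕ | ∃ f : Fin k → (Fin m →₀ ℕ), (∀ j, (monomial (f j) (1 : K)) ∉ I) ∧
      d = ∑ i : Fin m, Finset.univ.sup (fun j => (f j) i)}


section Aux

open Classical

variable {K : Type} [Field K]

lemma monomial_mem_of_le {m : ℕ} {I : Ideal (MvPolynomial (Fin m) K)} {c a : Fin m →₀ ℕ}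
    (hc : (monomial c (1 : K)) ∈ I) (h : c ≤ a) : (monomial a (1 : K)) ∈ I := by
  have he : (monomial a (1 : K)) = monomial (a - c) 1 * monomial c 1 := by
    rw [monomial_mul, one_mul, tsub_add_cancel_of_le h]
  rw [he]
  exact Ideal.mul_mem_left _ _ hc

lemma exists_minGen {m : ℕ} {I : Ideal (MvPolynomial (Fin m) K)} {a : Fin m →₀ ℕ}
    (ha : (monomial a (1 : K)) ∈ I) : ∃ c ∈ MinGens K I, c ≤ a := by
  suffices H : ∀ N (a : Fin m →₀ ℕ), (∑ i, a i) ≤ N → (monomial a (1 : K)) ∈ I →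
      ∃ c ∈ MinGens K I, c ≤ a from H _ a le_rfl ha
  intro N
  induction N with
  | zero =>
    intro a hdeg ha
    by_cases h : ∀ c' : Fin m →₀ ℕ, c' ≤ a → c' ≠ a → (monomial c' (1 : K)) ∉ I
    · exact ⟨a, ⟨ha, h⟩, le_rfl⟩
    · push_neg at h
      obtain ⟨c', hle, hne, hc'⟩ := h
      obtain ⟨i, hi⟩ := Finsupp.ne_iff.mp hne
      have hlt : (∑ i, c' i) < ∑ i, a i :=
        Finset.sum_lt_sum (fun j _ => Finsupp.le_def.mp hle j)
          ⟨i, Finset.mem_univ i, lt_of_le_of_ne (Finsupp.le_def.mp hle i) hi⟩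
      omega
  | succ N ih =>
    intro a hdeg ha
    by_cases h : ∀ c' : Fin m →₀ ℕ, c' ≤ a → c' ≠ a → (monomial c' (1 : K)) ∉ I
    · exact ⟨a, ⟨ha, h⟩, le_rfl⟩
    · push_neg at h
      obtain ⟨c', hle, hne, hc'⟩ := h
      obtain ⟨i, hi⟩ := Finsupp.ne_iff.mp hne
      have hlt : (∑ i, c' i) < ∑ i, a i :=
        Finset.sum_lt_sum (fun j _ => Finsupp.le_def.mp hle j)
          ⟨i, Finset.mem_univ i, lt_of_le_of_ne (Finsupp.le_def.mp hle i) hi⟩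
      obtain ⟨c, hc, hcc⟩ := ih c' (by omega) hc'
      exact ⟨c, hc, hcc.trans hle⟩

variable {V : Type}

/-- The algebra map killing the variables in `C` and fixing the others. -/
def killMap (C : Set V) : MvPolynomial V K →ₐ[K] MvPolynomial V K :=
  aeval (fun v => if v ∈ C then 0 else X v)

lemma killMap_X (C : Set V) (v : V) :
    killMap (K := K) C (X v) = if v ∈ C then 0 else X v := by
  simp [killMap]

lemma sub_killMap_mem (C : Set V) (f : MvPolynomial V K) :
    f - killMap C f ∈ Ideal.span ((fun v => (X v : MvPolynomial V K)) '' C) := by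
  induction f using MvPolynomial.induction_on with
  | C a => simp [killMap]
  | add p q hp hq =>
    rw [map_add]
    have h := Ideal.add_mem _ hp hq
    convert h using 1
    ring
  | mul_X p v hp =>
    rw [map_mul, killMap_X]
    by_cases hv : v ∈ C
    · rw [if_pos hv, mul_zero, sub_zero]
      exact Ideal.mul_mem_left _ _ (Ideal.subset_span ⟨v, hv, rfl⟩)
    · rw [if_neg hv, ← sub_mul]
      exact Ideal.mul_mem_right _ _ hp

lemma mem_span_iff_killMap (C : Set V) (f : MvPolynomial V K) :
    f ∈ Ideal.span ((fun v => (X v : MvPolynomial V K)) '' C) ↔ killMap C f = 0 := by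
  constructor
  · intro hf
    have hker : Ideal.span ((fun v => (X v : MvPolynomial V K)) '' C) ≤
        RingHom.ker (killMap (K := K) C).toRingHom := by
      rw [Ideal.span_le]
      rintro _ ⟨v, hv, rfl⟩
      simp [RingHom.mem_ker, killMap_X, hv]
    exact hker hf
  · intro hf
    have h := sub_killMap_mem C f
    rwa [hf, sub_zero] at h

lemma X_mem_span_X_iff (C : Set V) (w : V) :
    (X w : MvPolynomial V K) ∈ Ideal.span ((fun v => (X v : MvPolynomial V K)) '' C) ↔
      w ∈ C := by
  rw [mem_span_iff_killMap, killMap_X]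
  constructor
  · intro h
    by_contra hw
    rw [if_neg hw] at h
    exact MvPolynomial.X_ne_zero w h
  · intro h
    rw [if_pos h]

lemma isPrime_span_X (C : Set V) :
    (Ideal.span ((fun v => (X v : MvPolynomial V K)) '' C)).IsPrime := by
  constructor
  · intro h
    have h1 : (1 : MvPolynomial V K) ∈ Ideal.span ((fun v => (X v : MvPolynomial V K)) '' C) :=
      h ▸ Submodule.mem_top
    rw [mem_span_iff_killMap, map_one] at h1
    exact one_ne_zero h1
  · intro f g hfg
    rw [mem_span_iff_killMap, map_mul] at hfg
    rcases mul_eq_zero.mp hfg with h | h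
    · exact Or.inl ((mem_span_iff_killMap C f).mpr h)
    · exact Or.inr ((mem_span_iff_killMap C g).mpr h)

end Aux

/-- Let `I ⊂ S = K[x_1,…,x_n]` be a monomial ideal with `dim S/I = 0`.
The map `φ` sending a monomial `u = x^a ∈ Mon(S∖I)` to the monomial prime ideal
`φ(u) = (x_{1,a_1+1}, …, x_{n,a_n+1}) ⊂ S^℘` is well defined (i.e. `a_i + 1 ≤ b_i`
for all `i`) and establishes a bijection between `Mon(S∖I)` and `Min(I^℘)`. -/
theorem statement0 {K : Type} [Field K] {n : ℕ} (b : Fin n → ℕ)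
    (I : Ideal (MvPolynomial (Fin n) K)) (hI : ZeroDimData K b I) :
    (∀ a : Fin n →₀ ℕ, (monomial a (1 : K)) ∉ I → ∀ i : Fin n, a i < b i) ∧
    Set.BijOn (phiIdeal K b) {a : Fin n →₀ ℕ | (monomial a (1 : K)) ∉ I}
      (polarIdeal K b I).minimalPrimes := by
  classical
  obtain ⟨hmono, hItop, hb⟩ := hI
  -- Part 1: well-definedness
  have part1 : ∀ a : Fin n →₀ ℕ, (monomial a (1 : K)) ∉ I → ∀ i : Fin n, a i < b i := by
    intro a ha i
    by_contra h
    push_neg at h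
    exact ha (monomial_mem_of_le (hb i).2.1 (Finsupp.single_le_iff.mpr h))
  have hprime : ∀ a : Fin n →₀ ℕ, (phiIdeal K b a).IsPrime := fun a => isPrime_span_X _
  have hXmem : ∀ (a : Fin n →₀ ℕ) (w : PolVars n b),
      (X w : MvPolynomial (PolVars n b) K) ∈ phiIdeal K b a ↔ (w.2 : ℕ) = a w.1 :=
    fun a w => X_mem_span_X_iff _ w
  -- I^℘ ≤ φ(a) whenever x^a ∉ I
  have hpolar_le : ∀ a : Fin n →₀ ℕ, (monomial a (1 : K)) ∉ I →
      polarIdeal K b I ≤ phiIdeal K b a := by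
    intro a ha
    rw [polarIdeal, Ideal.span_le]
    rintro _ ⟨c, hc, rfl⟩
    show polMon K b c ∈ phiIdeal K b a
    have hnle : ¬ c ≤ a := fun h => ha (monomial_mem_of_le hc.1 h)
    obtain ⟨i, hi⟩ : ∃ i, a i < c i := by
      by_contra h
      push_neg at h
      exact hnle (Finsupp.le_def.mpr fun i => h i)
    have hib : a i < b i := part1 a ha i
    have hv : (⟨i, ⟨a i, hib⟩⟩ : PolVars n b) ∈
        Finset.univ.filter (fun v : PolVars n b => (v.2 : ℕ) < c v.1) := by
      simp [hi]
    rw [polMon, ← Finset.mul_prod_erase _ _ hv]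
    exact Ideal.mul_mem_right _ _ ((hXmem a _).mpr rfl)
  -- key minimality step
  have hmin : ∀ a : Fin n →₀ ℕ, (monomial a (1 : K)) ∉ I →
      ∀ q : Ideal (MvPolynomial (PolVars n b) K), q.IsPrime → polarIdeal K b I ≤ q →
      q ≤ phiIdeal K b a → phiIdeal K b a ≤ q := by
    intro a ha q hq hIq hqphi
    rw [phiIdeal, Ideal.span_le]
    rintro _ ⟨⟨i₀, j₀⟩, hv, rfl⟩
    have hv' : (j₀ : ℕ) = a i₀ := hv
    -- the monomial with exponent vector  a  with i₀-coordinate replaced by b i₀  lies in I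
    have ht : (monomial (Finsupp.update a i₀ (b i₀)) (1 : K)) ∈ I := by
      refine monomial_mem_of_le (hb i₀).2.1 (Finsupp.le_def.mpr fun i => ?_)
      rcases eq_or_ne i i₀ with rfl | hne
      · simp [Finsupp.single_apply]
      · simp [Finsupp.single_apply, Ne.symm hne]
    obtain ⟨c, hcmin, hcle⟩ := exists_minGen ht
    have hci : ∀ i, i ≠ i₀ → c i ≤ a i := by
      intro i hi
      have h := Finsupp.le_def.mp hcle i
      simpa [Finsupp.update, Function.update, hi] using h
    have hci0 : a i₀ < c i₀ := by
      by_contra h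
      push_neg at h
      refine ha (monomial_mem_of_le hcmin.1 (Finsupp.le_def.mpr fun i => ?_))
      rcases eq_or_ne i i₀ with rfl | hne
      · exact h
      · exact hci i hne
    have hpol : polMon K b c ∈ q := hIq (Ideal.subset_span ⟨c, hcmin, rfl⟩)
    rw [polMon, Ideal.IsPrime.prod_mem_iff] at hpol
    obtain ⟨⟨wi, wj⟩, hw, hwq⟩ := hpol
    have hwlt : (wj : ℕ) < c wi := by simpa using hw
    have hwphi : (wj : ℕ) = a wi := (hXmem a _).mp (hqphi hwq)
    have hw1 : wi = i₀ := by
      by_contra hne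
      have := hci wi hne
      omega
    subst hw1
    have : wj = j₀ := Fin.ext (by omega)
    subst this
    exact hwq
  have maps : Set.MapsTo (phiIdeal K b) {a : Fin n →₀ ℕ | (monomial a (1 : K)) ∉ I}
      (polarIdeal K b I).minimalPrimes := by
    intro a ha
    exact ⟨⟨hprime a, hpolar_le a ha⟩, fun q hq hle => hmin a ha q hq.1 hq.2 hle⟩
  have inj : Set.InjOn (phiIdeal K b) {a : Fin n →₀ ℕ | (monomial a (1 : K)) ∉ I} := by
    intro a ha a' ha' h
    ext i
    have hib := part1 a ha i
    have hX : (X (⟨i, ⟨a i, hib⟩⟩ : PolVars n b) : MvPolynomial (PolVars n b) K) ∈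
        phiIdeal K b a' := by
      rw [← h]
      exact (hXmem a _).mpr rfl
    exact (hXmem a' _).mp hX
  have surj : Set.SurjOn (phiIdeal K b) {a : Fin n →₀ ℕ | (monomial a (1 : K)) ∉ I}
      (polarIdeal K b I).minimalPrimes := by
    intro P hP
    obtain ⟨⟨hPprime, hPle⟩, hPmin⟩ := hP
    have hex : ∀ i : Fin n,
        (Finset.univ.filter (fun j : Fin (b i) =>
          (X (⟨i, j⟩ : PolVars n b) : MvPolynomial (PolVars n b) K) ∈ P)).Nonempty := by
      intro i
      obtain ⟨c, hc, hcle⟩ := exists_minGen (hb i).2.1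
      have hpc : polMon K b c ∈ P := hPle (Ideal.subset_span ⟨c, hc, rfl⟩)
      rw [polMon, Ideal.IsPrime.prod_mem_iff] at hpc
      obtain ⟨⟨wi, wj⟩, hw, hwP⟩ := hpc
      have hwlt : (wj : ℕ) < c wi := by simpa using hw
      have hwi : wi = i := by
        by_contra hne
        have h := Finsupp.le_def.mp hcle wi
        rw [Finsupp.single_apply, if_neg (fun h' => hne h'.symm)] at h
        omega
      subst hwi
      exact ⟨wj, Finset.mem_filter.mpr ⟨Finset.mem_univ _, hwP⟩⟩
    have hjmin : ∀ i : Fin n, ∃ j : Fin (b i),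
        (X (⟨i, j⟩ : PolVars n b) : MvPolynomial (PolVars n b) K) ∈ P ∧
        ∀ j' : Fin (b i),
          (X (⟨i, j'⟩ : PolVars n b) : MvPolynomial (PolVars n b) K) ∈ P → j ≤ j' := by
      intro i
      refine ⟨(Finset.univ.filter (fun j : Fin (b i) =>
          (X (⟨i, j⟩ : PolVars n b) : MvPolynomial (PolVars n b) K) ∈ P)).min' (hex i), ?_, ?_⟩
      · exact (Finset.mem_filter.mp (Finset.min'_mem _ (hex i))).2
      · intro j' hj'
        apply Finset.min'_le
        exact Finset.mem_filter.mpr ⟨Finset.mem_univ _, hj'⟩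
    choose jmin hjminP hjminle using hjmin
    have haapp : ∀ i, (Finsupp.equivFunOnFinite.symm (fun i => ((jmin i : ℕ))) : Fin n →₀ ℕ) i
        = (jmin i : ℕ) := fun i => rfl
    set a : Fin n →₀ ℕ := Finsupp.equivFunOnFinite.symm (fun i => (jmin i : ℕ)) with hadef
    have ha : (monomial a (1 : K)) ∉ I := by
      intro hmem
      obtain ⟨c, hc, hcle⟩ := exists_minGen hmem
      have hpc : polMon K b c ∈ P := hPle (Ideal.subset_span ⟨c, hc, rfl⟩)
      rw [polMon, Ideal.IsPrime.prod_mem_iff] at hpc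
      obtain ⟨⟨wi, wj⟩, hw, hwP⟩ := hpc
      have hwlt : (wj : ℕ) < c wi := by simpa using hw
      have h1 : c wi ≤ a wi := Finsupp.le_def.mp hcle wi
      have h2 : jmin wi ≤ wj := hjminle wi wj hwP
      rw [haapp] at h1
      have h3 : (jmin wi : ℕ) ≤ (wj : ℕ) := h2
      omega
    have hphiP : phiIdeal K b a ≤ P := by
      rw [phiIdeal, Ideal.span_le]
      rintro _ ⟨⟨i, j⟩, hv, rfl⟩
      have hv' : (j : ℕ) = a i := hv
      have : j = jmin i := Fin.ext (by rw [hv', haapp])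
      subst this
      exact hjminP i
    have hPle' : P ≤ phiIdeal K b a := hPmin ⟨hprime a, hpolar_le a ha⟩ hphiP
    exact ⟨a, ha, le_antisymm hphiP hPle'⟩
  exact ⟨part1, maps, inj, surj⟩

end
end

section
/- The number of minimal prime ideals of the polarization I^℘ equals dim_K S/I, which in turn equals the number of monomials in Mon(S∖I). -/
open MvPolynomial

noncomputable section

namespace Statement2Aux

variable {K : Type} [Field K] {σ : Type}

lemma split_mul_aux {R : Type} [CommRing R] (A B C E p q : R) (hp : A + B = p)
    (hq : C + E = q) : A * C = p * q - (B * q + A * E) := by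
  rw [← hp, ← hq]; ring

open Classical in
/-- the part of `p` with support in `D` -/
def restrPart (p : MvPolynomial σ K) (D : Set (σ →₀ ℕ)) : MvPolynomial σ K :=
  ∑ d ∈ p.support.filter (fun d => d ∈ D), monomial d (coeff d p)

open Classical in
lemma coeff_restrPart (p : MvPolynomial σ K) (D : Set (σ →₀ ℕ)) (e : σ →₀ ℕ) :
    coeff e (restrPart p D) = if e ∈ D then coeff e p else 0 := by
  rw [restrPart, coeff_sum]
  by_cases h : e ∈ D
  · rw [if_pos h]
    by_cases h2 : e ∈ p.support
    · rw [Finset.sum_eq_single e]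
      · rw [coeff_monomial, if_pos rfl]
      · intro d _ hne; rw [coeff_monomial, if_neg hne]
      · intro he; exact absurd (Finset.mem_filter.mpr ⟨h2, h⟩) he
    · rw [notMem_support_iff.mp h2]
      apply Finset.sum_eq_zero
      intro d _
      rw [coeff_monomial]
      split_ifs with hde
      · rw [hde, notMem_support_iff.mp h2]
      · rfl
  · rw [if_neg h]
    apply Finset.sum_eq_zero
    intro d hd
    rw [coeff_monomial]
    split_ifs with hde
    · exact absurd (hde ▸ (Finset.mem_filter.mp hd).2) h
    · rfl

lemma restrPart_add_restrPart (p : MvPolynomial σ K) (D : Set (σ →₀ ℕ)) :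
    restrPart p D + restrPart p Dᶜ = p := by
  classical
  apply MvPolynomial.ext
  intro e
  rw [coeff_add, coeff_restrPart, coeff_restrPart]
  by_cases h : e ∈ D <;> simp [h]

lemma support_restrPart (p : MvPolynomial σ K) (D : Set (σ →₀ ℕ)) :
    ↑(restrPart p D).support ⊆ D := by
  intro e he
  rw [Finset.mem_coe, mem_support_iff, coeff_restrPart] at he
  by_contra h
  simp [h] at he

lemma isPrime_span_X (s : Set σ) :
    (Ideal.span (X '' s : Set (MvPolynomial σ K))).IsPrime := by
  classical
  set J := Ideal.span (X '' s : Set (MvPolynomial σ K)) with hJ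
  set D : Set (σ →₀ ℕ) := {d | ∀ v ∈ s, d v = 0} with hD
  have hcrit : ∀ p : MvPolynomial σ K, p ∈ J ↔ ∀ m ∈ p.support, ∃ i ∈ s, m i ≠ 0 :=
    fun p => mem_ideal_span_X_image
  have hBpart : ∀ p : MvPolynomial σ K, restrPart p Dᶜ ∈ J := by
    intro p
    rw [hcrit]
    intro m hm
    have := support_restrPart p Dᶜ (Finset.mem_coe.mpr hm)
    rw [Set.mem_compl_iff, hD, Set.mem_setOf_eq] at this
    push_neg at this
    obtain ⟨v, hv, hne⟩ := this
    exact ⟨v, hv, hne⟩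
  constructor
  · intro h
    rw [Ideal.eq_top_iff_one, hcrit] at h
    obtain ⟨i, _, hne⟩ := h 0 (by rw [mem_support_iff]; simp)
    simp at hne
  · intro p q hpq
    by_contra hcon
    push_neg at hcon
    obtain ⟨hp, hq⟩ := hcon
    have hp2 : restrPart p D ≠ 0 := by
      rw [hcrit] at hp
      push_neg at hp
      obtain ⟨m, hm, hmD⟩ := hp
      intro h0
      have : coeff m (restrPart p D) = coeff m p := by
        rw [coeff_restrPart]
        rw [if_pos (show m ∈ D from fun v hv => hmD v hv)]
      rw [h0] at this
      exact (mem_support_iff.mp hm) this.symm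
    have hq2 : restrPart q D ≠ 0 := by
      rw [hcrit] at hq
      push_neg at hq
      obtain ⟨m, hm, hmD⟩ := hq
      intro h0
      have : coeff m (restrPart q D) = coeff m q := by
        rw [coeff_restrPart]
        rw [if_pos (show m ∈ D from fun v hv => hmD v hv)]
      rw [h0] at this
      exact (mem_support_iff.mp hm) this.symm
    have hmul : restrPart p D * restrPart q D ∈ J := by
      have h1 := split_mul_aux (restrPart p D) (restrPart p Dᶜ) (restrPart q D)
        (restrPart q Dᶜ) p q (restrPart_add_restrPart p D) (restrPart_add_restrPart q D)
      have h2 : restrPart p Dᶜ * q + restrPart p D * restrPart q Dᶜ ∈ J :=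
        Ideal.add_mem _ (Ideal.mul_mem_right _ _ (hBpart p))
          (Ideal.mul_mem_left _ _ (hBpart q))
      rw [h1]
      exact Ideal.sub_mem _ hpq h2
    have hne : restrPart p D * restrPart q D ≠ 0 := mul_ne_zero hp2 hq2
    obtain ⟨m, hm⟩ := Finset.nonempty_iff_ne_empty.mpr
      (fun h => hne (support_eq_empty.mp h))
    obtain ⟨i, his, hine⟩ := (hcrit _).mp hmul m hm
    have hmem := MvPolynomial.support_mul _ _ hm
    rw [Finset.mem_add] at hmem
    obtain ⟨d, hd, e, he, rfl⟩ := hmem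
    have hdD := support_restrPart p D (Finset.mem_coe.mpr hd)
    have heD := support_restrPart q D (Finset.mem_coe.mpr he)
    apply hine
    rw [Finsupp.add_apply, hdD i his, heD i his]

lemma monomial_mem_span_iff' {A : Set (σ →₀ ℕ)} {d : σ →₀ ℕ} :
    monomial d (1 : K) ∈ Ideal.span ((fun c => monomial c (1 : K)) '' A) ↔ ∃ a ∈ A, a ≤ d := by
  classical
  rw [mem_ideal_span_monomial_image]
  constructor
  · intro h
    exact h d (by rw [support_monomial, if_neg one_ne_zero]; exact Finset.mem_singleton_self _)
  · rintro ⟨a, ha, hle⟩ xi hxi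
    rw [support_monomial, if_neg one_ne_zero, Finset.mem_singleton] at hxi
    exact ⟨a, ha, hxi ▸ hle⟩

lemma prod_X_eq (F : Finset σ) :
    (∏ v ∈ F, (X v : MvPolynomial σ K)) = monomial (∑ v ∈ F, Finsupp.single v 1) 1 := by
  classical
  induction F using Finset.induction with
  | empty => simp [monomial_zero']
  | insert _ _ h ih =>
    rw [Finset.prod_insert h, Finset.sum_insert h, ih]
    rw [show (X _ : MvPolynomial σ K) = monomial (Finsupp.single _ 1) 1 from rfl, monomial_mul,
      one_mul]

lemma sum_single_apply (F : Finset σ) (w : σ) [DecidableEq σ] :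
    (∑ v ∈ F, Finsupp.single v 1 : σ →₀ ℕ) w = if w ∈ F then 1 else 0 := by
  rw [Finsupp.finset_sum_apply]
  simp [Finsupp.single_apply, Finset.sum_ite_eq' F w (fun _ => 1)]

lemma X_mem_span_X_iff {s : Set σ} {w : σ} :
    (X w : MvPolynomial σ K) ∈ Ideal.span (X '' s : Set (MvPolynomial σ K)) ↔ w ∈ s := by
  classical
  rw [mem_ideal_span_X_image]
  constructor
  · intro h
    obtain ⟨i, his, hne⟩ :=
      h (Finsupp.single w 1) (by rw [support_X]; exact Finset.mem_singleton_self _)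
    rw [Finsupp.single_apply] at hne
    by_cases hwi : w = i
    · rwa [hwi]
    · simp [hwi] at hne
  · intro h m hm
    rw [support_X, Finset.mem_singleton] at hm
    subst hm
    exact ⟨w, h, by simp⟩

lemma prod_X_mem_span_X_iff {s : Set σ} (F : Finset σ) :
    (∏ v ∈ F, (X v : MvPolynomial σ K)) ∈ Ideal.span (X '' s : Set (MvPolynomial σ K)) ↔
      ∃ v ∈ F, v ∈ s := by
  classical
  rw [mem_ideal_span_X_image, prod_X_eq]
  rw [support_monomial]
  simp only [one_ne_zero, if_false]
  constructor
  · intro h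
    obtain ⟨i, his, hne⟩ := h _ (Finset.mem_singleton_self _)
    rw [sum_single_apply] at hne
    refine ⟨i, ?_, his⟩
    by_contra hc; simp [hc] at hne
  · rintro ⟨v, hvF, hvs⟩ m hm
    rw [Finset.mem_singleton] at hm
    subst hm
    exact ⟨v, hvs, by rw [sum_single_apply]; simp [hvF]⟩

end Statement2Aux


namespace Statement2Aux

variable {K : Type} [Field K] {m : ℕ} {I : Ideal (MvPolynomial (Fin m) K)}

lemma mem_mono {A : Set (Fin m →₀ ℕ)}
    (hA : I = Ideal.span ((fun c => monomial c (1 : K)) '' A)) {d e : Fin m →₀ ℕ}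
    (hd : monomial d (1 : K) ∈ I) (hde : d ≤ e) : monomial e (1 : K) ∈ I := by
  rw [hA, monomial_mem_span_iff'] at hd ⊢
  obtain ⟨a, ha, hle⟩ := hd
  exact ⟨a, ha, le_trans hle hde⟩

lemma sum_lt_of_le_of_ne {c d : Fin m →₀ ℕ} (hle : c ≤ d) (hne : c ≠ d) :
    (∑ i, c i) < ∑ i, d i := by
  apply Finset.sum_lt_sum
  · intro i _; exact Finsupp.le_def.mp hle i
  · by_contra h
    push_neg at h
    apply hne
    ext i
    exact le_antisymm (Finsupp.le_def.mp hle i) (by simpa using h i (Finset.mem_univ i))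

lemma exists_minGen {d : Fin m →₀ ℕ}
    (hd : monomial d (1 : K) ∈ I) : ∃ c ∈ MinGens K I, c ≤ d := by
  have key : ∀ N : ℕ, ∀ d : Fin m →₀ ℕ, (∑ i, d i) ≤ N → monomial d (1 : K) ∈ I →
      ∃ c ∈ MinGens K I, c ≤ d := by
    intro N
    induction N with
    | zero =>
      intro d hN hd
      by_cases hmin : d ∈ MinGens K I
      · exact ⟨d, hmin, le_rfl⟩
      · have hmin2 : ¬ ∀ c' : Fin m →₀ ℕ, c' ≤ d → c' ≠ d → (monomial c' (1 : K)) ∉ I :=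
          fun h => hmin ⟨hd, h⟩
        push_neg at hmin2
        obtain ⟨c', hle, hne, hmem⟩ := hmin2
        exact absurd (lt_of_lt_of_le (sum_lt_of_le_of_ne hle hne) hN) (Nat.not_lt_zero _)
    | succ N ih =>
      intro d hN hd
      by_cases hmin : d ∈ MinGens K I
      · exact ⟨d, hmin, le_rfl⟩
      · have hmin2 : ¬ ∀ c' : Fin m →₀ ℕ, c' ≤ d → c' ≠ d → (monomial c' (1 : K)) ∉ I :=
          fun h => hmin ⟨hd, h⟩
        push_neg at hmin2
        obtain ⟨c', hle, hne, hmem⟩ := hmin2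
        have hlt := sum_lt_of_le_of_ne hle hne
        obtain ⟨c, hc, hcle⟩ := ih c' (by omega) hmem
        exact ⟨c, hc, le_trans hcle hle⟩
  exact key (∑ i, d i) d le_rfl hd

variable {b : Fin m → ℕ}

lemma lt_b_of_not_mem (hZ : ZeroDimData K b I) {a : Fin m →₀ ℕ}
    (ha : monomial a (1 : K) ∉ I) (i : Fin m) : a i < b i := by
  obtain ⟨⟨A, hA⟩, _, hb⟩ := hZ
  by_contra h
  push_neg at h
  apply ha
  apply mem_mono hA (hb i).2.1
  intro j
  rw [Finsupp.single_apply]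
  split_ifs with hij
  · subst hij; exact h
  · exact Nat.zero_le _

lemma single_mem_minGens (hZ : ZeroDimData K b I) (i : Fin m) :
    Finsupp.single i (b i) ∈ MinGens K I := by
  obtain ⟨_, _, hb⟩ := hZ
  refine ⟨(hb i).2.1, ?_⟩
  intro c' hle hne
  have hc' : c' = Finsupp.single i (c' i) := by
    ext j
    by_cases hij : j = i
    · subst hij; simp
    · have := Finsupp.le_def.mp hle j
      rw [Finsupp.single_apply, if_neg (by exact fun h => hij h.symm)] at this
      rw [Finsupp.single_apply, if_neg (by exact fun h => hij h.symm)]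
      omega
  have hlt : c' i < b i := by
    have h1 : c' i ≤ b i := by
      have := Finsupp.le_def.mp hle i
      rwa [Finsupp.single_eq_same] at this
    rcases lt_or_eq_of_le h1 with h | h
    · exact h
    · exact absurd (by rw [hc', h]) hne
  rw [hc']
  exact (hb i).2.2 (c' i) hlt

lemma polMon_mem_span_X_iff {s : Set (PolVars m b)} (c : Fin m →₀ ℕ) :
    polMon K b c ∈ Ideal.span (X '' s : Set (MvPolynomial (PolVars m b) K)) ↔
      ∃ v : PolVars m b, (v.2 : ℕ) < c v.1 ∧ v ∈ s := by
  rw [polMon, prod_X_mem_span_X_iff]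
  constructor
  · rintro ⟨v, hv, hvs⟩
    exact ⟨v, (Finset.mem_filter.mp hv).2, hvs⟩
  · rintro ⟨v, hv, hvs⟩
    exact ⟨v, Finset.mem_filter.mpr ⟨Finset.mem_univ _, hv⟩, hvs⟩

lemma phiIdeal_isPrime (a : Fin m →₀ ℕ) : (phiIdeal K b a).IsPrime :=
  isPrime_span_X _

lemma polarIdeal_le_phiIdeal (hZ : ZeroDimData K b I) {a : Fin m →₀ ℕ}
    (ha : monomial a (1 : K) ∉ I) : polarIdeal K b I ≤ phiIdeal K b a := by
  obtain ⟨A, hA⟩ := hZ.1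
  rw [polarIdeal, Ideal.span_le]
  rintro _ ⟨c, hc, rfl⟩
  have hnle : ¬ c ≤ a := fun h => ha (mem_mono hA hc.1 h)
  rw [Finsupp.le_def] at hnle
  push_neg at hnle
  obtain ⟨i, hi⟩ := hnle
  have hab : a i < b i := lt_b_of_not_mem hZ ha i
  show polMon K b c ∈ phiIdeal K b a
  rw [phiIdeal]
  exact (polMon_mem_span_X_iff c).mpr ⟨⟨i, ⟨a i, hab⟩⟩, hi, rfl⟩

end Statement2Aux



namespace Statement2Aux

variable {K : Type} [Field K] {m : ℕ} {b : Fin m → ℕ} {I : Ideal (MvPolynomial (Fin m) K)}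

lemma X_mem_phiIdeal_iff {a : Fin m →₀ ℕ} {w : PolVars m b} :
    (X w : MvPolynomial (PolVars m b) K) ∈ phiIdeal K b a ↔ (w.2 : ℕ) = a w.1 := by
  rw [phiIdeal]
  exact X_mem_span_X_iff

lemma X_mem_phiIdeal (a : Fin m →₀ ℕ) (i : Fin m) (h : a i < b i) :
    (X (⟨i, ⟨a i, h⟩⟩ : PolVars m b) : MvPolynomial (PolVars m b) K) ∈ phiIdeal K b a :=
  X_mem_phiIdeal_iff.mpr rfl

lemma eq_of_phi_le_phi (hZ : ZeroDimData K b I) {a a' : Fin m →₀ ℕ}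
    (ha : monomial a (1 : K) ∉ I) (_ha' : monomial a' (1 : K) ∉ I)
    (h : phiIdeal K b a ≤ phiIdeal K b a') : a = a' := by
  ext i
  exact X_mem_phiIdeal_iff.mp (h (X_mem_phiIdeal a i (lt_b_of_not_mem hZ ha i)))

lemma exists_phi_le (hZ : ZeroDimData K b I) {P : Ideal (MvPolynomial (PolVars m b) K)}
    (hP : P.IsPrime) (hle : polarIdeal K b I ≤ P) :
    ∃ a : Fin m →₀ ℕ, monomial a (1 : K) ∉ I ∧ phiIdeal K b a ≤ P := by
  classical
  have hex : ∀ i : Fin m, ∃ j : ℕ, ∃ h : j < b i, X (⟨i, ⟨j, h⟩⟩ : PolVars m b) ∈ P := by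
    intro i
    have hmem : polMon K b (Finsupp.single i (b i)) ∈ P :=
      hle (Ideal.subset_span ⟨_, single_mem_minGens hZ i, rfl⟩)
    rw [polMon, Ideal.IsPrime.prod_mem_iff] at hmem
    obtain ⟨v, hvF, hvP⟩ := hmem
    obtain ⟨i', j⟩ := v
    rw [Finset.mem_filter] at hvF
    have hj : (j : ℕ) < Finsupp.single i (b i) i' := hvF.2
    have hii : i' = i := by
      by_contra hne
      rw [Finsupp.single_apply, if_neg (fun h => hne h.symm)] at hj
      omega
    subst hii
    exact ⟨(j : ℕ), j.isLt, hvP⟩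
  set f : Fin m → ℕ := fun i => Nat.find (hex i) with hf
  set a : Fin m →₀ ℕ := Finsupp.equivFunOnFinite.symm f with haa
  have happ : ∀ i, a i = f i := fun i => rfl
  have hmin : ∀ (i : Fin m) (j : ℕ) (h : j < b i),
      X (⟨i, ⟨j, h⟩⟩ : PolVars m b) ∈ P → f i ≤ j :=
    fun i j h hx => Nat.find_min' (hex i) ⟨h, hx⟩
  refine ⟨a, ?_, ?_⟩
  · intro hmem
    obtain ⟨c, hc, hcle⟩ := exists_minGen hmem
    have hcP : polMon K b c ∈ P := hle (Ideal.subset_span ⟨c, hc, rfl⟩)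
    rw [polMon, Ideal.IsPrime.prod_mem_iff] at hcP
    obtain ⟨v, hvF, hvP⟩ := hcP
    obtain ⟨i, j⟩ := v
    rw [Finset.mem_filter] at hvF
    have hj : (j : ℕ) < c i := hvF.2
    have h1 : f i ≤ (j : ℕ) := hmin i (j : ℕ) j.isLt hvP
    have h2 : c i ≤ a i := Finsupp.le_def.mp hcle i
    rw [happ] at h2
    omega
  · rw [phiIdeal, Ideal.span_le]
    rintro _ ⟨v, hv, rfl⟩
    obtain ⟨i, j⟩ := v
    have hv' : (j : ℕ) = f i := by rw [Set.mem_setOf_eq] at hv; rw [← happ i]; exact hv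
    obtain ⟨h, hXP⟩ := Nat.find_spec (hex i)
    have : j = ⟨f i, h⟩ := Fin.ext hv'
    rw [this]
    exact hXP

lemma minimalPrimes_eq (hZ : ZeroDimData K b I) :
    (polarIdeal K b I).minimalPrimes
      = phiIdeal K b '' {a : Fin m →₀ ℕ | monomial a (1 : K) ∉ I} := by
  ext P
  simp only [Ideal.minimalPrimes, Set.mem_setOf_eq]
  constructor
  · rintro ⟨⟨hprime, hle⟩, hminim⟩
    obtain ⟨a, haI, hphile⟩ := exists_phi_le hZ hprime hle
    have h1 : P ≤ phiIdeal K b a :=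
      hminim ⟨phiIdeal_isPrime a, polarIdeal_le_phiIdeal hZ haI⟩ hphile
    exact ⟨a, haI, le_antisymm hphile h1⟩
  · rintro ⟨a, haI, rfl⟩
    refine ⟨⟨phiIdeal_isPrime a, polarIdeal_le_phiIdeal hZ haI⟩, ?_⟩
    intro Q hQ hQle
    obtain ⟨a', ha'I, hphile'⟩ := exists_phi_le hZ hQ.1 hQ.2
    have : a' = a := eq_of_phi_le_phi hZ ha'I haI (le_trans hphile' hQle)
    rw [← this]
    exact hphile'

end Statement2Aux


namespace Statement2Aux

variable {K : Type} [Field K] {m : ℕ} {b : Fin m → ℕ} {I : Ideal (MvPolynomial (Fin m) K)}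

lemma mem_iff_support {A : Set (Fin m →₀ ℕ)}
    (hA : I = Ideal.span ((fun c => monomial c (1 : K)) '' A)) (p : MvPolynomial (Fin m) K) :
    p ∈ I ↔ ∀ d ∈ p.support, monomial d (1 : K) ∈ I := by
  constructor
  · intro hp d hd
    rw [hA, monomial_mem_span_iff']
    rw [hA, mem_ideal_span_monomial_image] at hp
    exact hp d hd
  · intro h
    rw [hA, mem_ideal_span_monomial_image]
    intro d hd
    have := h d hd
    rw [hA, monomial_mem_span_iff'] at this
    exact this

lemma isCompl_restrictSupport (U : Set (Fin m →₀ ℕ)) :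
    IsCompl (restrictSupport K U) (restrictSupport K Uᶜ :
      Submodule K (MvPolynomial (Fin m) K)) := by
  constructor
  · rw [Submodule.disjoint_def]
    intro p hp hp'
    rw [restrictSupport, AddMonoidAlgebra.mem_supported] at hp hp'
    rw [← support_eq_empty, ← Finset.coe_eq_empty]
    have : ↑p.support ⊆ U ∩ Uᶜ := Set.subset_inter hp hp'
    rwa [Set.inter_compl_self, Set.subset_empty_iff] at this
  · rw [codisjoint_iff_le_sup]
    intro p _
    rw [Submodule.mem_sup]
    refine ⟨restrPart p U, ?_, restrPart p Uᶜ, ?_, restrPart_add_restrPart p U⟩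
    · rw [restrictSupport, AddMonoidAlgebra.mem_supported]
      exact support_restrPart p U
    · rw [restrictSupport, AddMonoidAlgebra.mem_supported]
      exact support_restrPart p Uᶜ

lemma finite_T (hZ : ZeroDimData K b I) :
    {a : Fin m →₀ ℕ | monomial a (1 : K) ∉ I}.Finite := by
  have hfin : (Set.univ.pi fun i : Fin m => Set.Iio (b i)).Finite :=
    Set.Finite.pi fun _ => Set.finite_Iio _
  have hsub : {a : Fin m →₀ ℕ | monomial a (1 : K) ∉ I} ⊆
      (fun (a : Fin m →₀ ℕ) => (a : Fin m → ℕ)) ⁻¹'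
        (Set.univ.pi fun i => Set.Iio (b i)) := by
    intro a ha
    intro i _
    exact lt_b_of_not_mem hZ ha i
  exact Set.Finite.subset
    (hfin.preimage (Set.injOn_of_injective DFunLike.coe_injective)) hsub

lemma finrank_eq_ncard (hZ : ZeroDimData K b I) :
    Module.finrank K (MvPolynomial (Fin m) K ⧸ I)
      = {a : Fin m →₀ ℕ | (monomial a (1 : K)) ∉ I}.ncard := by
  classical
  obtain ⟨A, hA⟩ := hZ.1
  set U : Set (Fin m →₀ ℕ) := {a : Fin m →₀ ℕ | monomial a (1 : K) ∈ I} with hU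
  have hUc : Uᶜ = {a : Fin m →₀ ℕ | monomial a (1 : K) ∉ I} := by
    ext a; simp [hU]
  have hker : LinearMap.ker (Ideal.Quotient.mkₐ K I).toLinearMap
      = MvPolynomial.restrictSupport K U := by
    ext p
    rw [LinearMap.mem_ker]
    rw [show (Ideal.Quotient.mkₐ K I).toLinearMap p = Ideal.Quotient.mk I p from rfl]
    rw [Ideal.Quotient.eq_zero_iff_mem]
    rw [mem_iff_support hA, MvPolynomial.restrictSupport, AddMonoidAlgebra.mem_supported]
    constructor
    · intro h d hd
      exact h d hd
    · intro h d hd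
      exact h hd
  have e1 : (MvPolynomial (Fin m) K ⧸
        LinearMap.ker (Ideal.Quotient.mkₐ K I).toLinearMap)
      ≃ₗ[K] (MvPolynomial (Fin m) K ⧸ I) :=
    LinearMap.quotKerEquivOfSurjective _ (Ideal.Quotient.mkₐ_surjective K I)
  have e2 : (MvPolynomial (Fin m) K ⧸ MvPolynomial.restrictSupport K U)
      ≃ₗ[K] MvPolynomial.restrictSupport K Uᶜ :=
    Submodule.quotientEquivOfIsCompl _ _ (isCompl_restrictSupport U)
  haveI : Fintype (Uᶜ : Set (Fin m →₀ ℕ)) := (hUc ▸ finite_T hZ).fintype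
  have h1 : Module.finrank K (MvPolynomial (Fin m) K ⧸ I)
      = Module.finrank K (MvPolynomial.restrictSupport K Uᶜ :
          Submodule K (MvPolynomial (Fin m) K)) := by
    rw [← e1.finrank_eq, hker, e2.finrank_eq]
  rw [h1, Module.finrank_eq_card_basis (MvPolynomial.basisRestrictSupport K Uᶜ)]
  rw [← Nat.card_eq_fintype_card, Nat.card_coe_set_eq, hUc]

end Statement2Aux

/-- The number of minimal prime ideals of the polarization `I^℘` equals
`dim_K S/I`, which in turn equals the number of monomials in `Mon(S∖I)`. -/
theorem statement2 {K : Type} [Field K] {n : ℕ} (b : Fin n → ℕ)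
    (I : Ideal (MvPolynomial (Fin n) K)) (hI : ZeroDimData K b I) :
    (polarIdeal K b I).minimalPrimes.ncard
        = Module.finrank K (MvPolynomial (Fin n) K ⧸ I) ∧
    Module.finrank K (MvPolynomial (Fin n) K ⧸ I)
        = {a : Fin n →₀ ℕ | (monomial a (1 : K)) ∉ I}.ncard := by
  have h2 := Statement2Aux.finrank_eq_ncard hI
  refine ⟨?_, h2⟩
  rw [h2, Statement2Aux.minimalPrimes_eq hI]
  apply Set.ncard_image_of_injOn
  intro a ha a' ha' h
  exact Statement2Aux.eq_of_phi_le_phi hI ha ha' (le_of_eq h)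

end
end

section
/- A subset F ⊆ 𝒮 is a facet (maximal face) of Δ(I) if and only if there exists a monomial x_1^{a_1}⋯x_n^{a_n} ∈ Mon(S∖I) such that F = 𝒮 ∖ {x_{1,a_1+1}, …, x_{n,a_n+1}}. -/
open MvPolynomial

noncomputable section

namespace Statement3Aux

variable {K : Type} [Field K] {n : ℕ} {b : Fin n → ℕ}

def eF (b : Fin n → ℕ) (F : Finset (PolVars n b)) : PolVars n b →₀ ℕ :=
  ∑ v ∈ F, Finsupp.single v 1

lemma eF_apply (F : Finset (PolVars n b)) (w : PolVars n b) :
    eF b F w = if w ∈ F then 1 else 0 := by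
  classical
  rw [eF, Finsupp.finset_sum_apply]
  simp [Finsupp.single_apply]

lemma eF_le_iff {F G : Finset (PolVars n b)} : eF b F ≤ eF b G ↔ F ⊆ G := by
  rw [Finsupp.le_def]
  constructor
  · intro h v hv
    have := h v
    rw [eF_apply, eF_apply, if_pos hv] at this
    by_contra hvG
    rw [if_neg hvG] at this; omega
  · intro h v
    rw [eF_apply, eF_apply]
    by_cases hv : v ∈ F
    · rw [if_pos hv, if_pos (h hv)]
    · rw [if_neg hv]; omega

lemma prod_X_eq (F : Finset (PolVars n b)) :
    (∏ v ∈ F, (X v : MvPolynomial (PolVars n b) K)) = monomial (eF b F) 1 := by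
  classical
  induction F using Finset.induction with
  | empty => simp [eF]
  | insert _ _ hv ih =>
      rename_i v F
      have he : eF b (insert v F) = Finsupp.single v 1 + eF b F := Finset.sum_insert hv
      rw [Finset.prod_insert hv, ih, he]
      rw [show (X v : MvPolynomial (PolVars n b) K) = monomial (Finsupp.single v 1) 1 by
        rw [← X_pow_eq_monomial, pow_one]]
      rw [monomial_mul, one_mul]

lemma mem_of_le {I : Ideal (MvPolynomial (Fin n) K)} {c d : Fin n →₀ ℕ} (h : c ≤ d)
    (hc : monomial c (1 : K) ∈ I) : monomial d (1 : K) ∈ I := by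
  have : monomial d (1 : K) = monomial (d - c) 1 * monomial c 1 := by
    rw [monomial_mul, one_mul, tsub_add_cancel_of_le h]
  rw [this]
  exact I.mul_mem_left _ hc

lemma sum_lt_sum_of_lt {c d : Fin n →₀ ℕ} (h : c ≤ d) (hne : c ≠ d) :
    ∑ i, c i < ∑ i, d i := by
  obtain ⟨i, hi⟩ : ∃ i, c i ≠ d i := by
    by_contra hcon
    push_neg at hcon
    exact hne (Finsupp.ext hcon)
  exact Finset.sum_lt_sum (fun i _ => Finsupp.le_def.mp h i)
    ⟨i, Finset.mem_univ i, lt_of_le_of_ne (Finsupp.le_def.mp h i) hi⟩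

lemma exists_minGen_le_aux (I : Ideal (MvPolynomial (Fin n) K)) :
    ∀ (N : ℕ) (d : Fin n →₀ ℕ), (∑ i, d i) ≤ N → monomial d (1 : K) ∈ I →
      ∃ c ∈ MinGens K I, c ≤ d := by
  intro N
  induction N with
  | zero =>
      intro d hdeg hd
      refine ⟨d, ⟨hd, fun c' hle hne hc' => ?_⟩, le_refl d⟩
      have := sum_lt_sum_of_lt hle hne
      omega
  | succ N ih =>
      intro d hdeg hd
      by_cases hmin : ∀ c' : Fin n →₀ ℕ, c' ≤ d → c' ≠ d → (monomial c' (1 : K)) ∉ I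
      · exact ⟨d, ⟨hd, hmin⟩, le_refl d⟩
      · push_neg at hmin
        obtain ⟨c', hle, hne, hc'⟩ := hmin
        have hlt := sum_lt_sum_of_lt hle hne
        obtain ⟨c, hc, hcle⟩ := ih c' (by omega) hc'
        exact ⟨c, hc, le_trans hcle hle⟩

lemma exists_minGen_le {I : Ideal (MvPolynomial (Fin n) K)} {d : Fin n →₀ ℕ}
    (hd : monomial d (1 : K) ∈ I) : ∃ c ∈ MinGens K I, c ≤ d :=
  exists_minGen_le_aux I (∑ i, d i) d le_rfl hd

lemma face_iff (I : Ideal (MvPolynomial (Fin n) K)) (F : Finset (PolVars n b)) :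
    F ∈ facesDelta K b I ↔ ∀ c ∈ MinGens K I,
      ¬ (Finset.univ.filter (fun v : PolVars n b => (v.2 : ℕ) < c v.1) ⊆ F) := by
  have himg : polMon K b '' MinGens K I =
      (fun s => monomial s (1 : K)) ''
        ((fun c : Fin n →₀ ℕ =>
          eF b (Finset.univ.filter (fun v : PolVars n b => (v.2 : ℕ) < c v.1))) ''
          MinGens K I) := by
    rw [Set.image_image]
    refine Set.image_congr' (fun c => ?_)
    show polMon K b c = _
    unfold polMon
    exact prod_X_eq _
  classical
  show (∏ v ∈ F, (X v : MvPolynomial (PolVars n b) K)) ∉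
      Ideal.span (polMon K b '' MinGens K I) ↔ _
  rw [prod_X_eq, himg, mem_ideal_span_monomial_image]
  rw [support_monomial, if_neg (one_ne_zero (α := K))]
  constructor
  · intro h c hc hsub
    refine h (fun xi hxi => ?_)
    rw [Finset.mem_singleton] at hxi
    subst hxi
    exact ⟨_, ⟨c, hc, rfl⟩, eF_le_iff.mpr hsub⟩
  · intro h hall
    obtain ⟨si, hsi, hle⟩ := hall (eF b F) (Finset.mem_singleton_self _)
    obtain ⟨c, hc, rfl⟩ := hsi
    exact h c hc (eF_le_iff.mp hle)

end Statement3Aux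

/-- A subset `F ⊆ 𝒮` is a facet (maximal face) of `Δ(I)` if and only if there
exists a monomial `x^a ∈ Mon(S∖I)` such that `F = 𝒮 ∖ {x_{1,a_1+1}, …, x_{n,a_n+1}}`. -/
theorem statement3 {K : Type} [Field K] {n : ℕ} (b : Fin n → ℕ)
    (I : Ideal (MvPolynomial (Fin n) K)) (hI : ZeroDimData K b I) :
    ∀ F : Finset (PolVars n b),
      IsFacetOf (facesDelta K b I) F ↔
        ∃ a : Fin n →₀ ℕ, (monomial a (1 : K)) ∉ I ∧
          F = Finset.univ.filter (fun v : PolVars n b => (v.2 : ℕ) ≠ a v.1) := by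
  classical
  obtain ⟨hIm, hItop, hb⟩ := hI
  have key_lt : ∀ a : Fin n →₀ ℕ, (monomial a (1 : K)) ∉ I → ∀ i : Fin n, a i < b i := by
    intro a ha i
    by_contra h
    push_neg at h
    apply ha
    refine Statement3Aux.mem_of_le ?_ (hb i).2.1
    rw [Finsupp.le_def]
    intro i'
    rw [Finsupp.single_apply]
    by_cases hi : i = i'
    · subst hi; simpa using h
    · simp [hi]
  have face_of : ∀ a : Fin n →₀ ℕ, (monomial a (1 : K)) ∉ I →
      (Finset.univ.filter (fun v : PolVars n b => (v.2 : ℕ) ≠ a v.1)) ∈ facesDelta K b I := by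
    intro a ha
    rw [Statement3Aux.face_iff]
    intro c hc hsub
    apply ha
    refine Statement3Aux.mem_of_le ?_ hc.1
    rw [Finsupp.le_def]
    intro i
    by_contra hgt
    push_neg at hgt
    have hib : a i < b i := key_lt a ha i
    have hmem : (⟨i, ⟨a i, hib⟩⟩ : PolVars n b) ∈
        Finset.univ.filter (fun v : PolVars n b => (v.2 : ℕ) < c v.1) := by
      simp [hgt]
    have := hsub hmem
    simp at this
  intro F
  constructor
  · rintro ⟨hF, hmax⟩
    have hrow : ∀ i : Fin n, ∃ j : Fin (b i), (⟨i, j⟩ : PolVars n b) ∉ F := by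
      intro i
      by_contra hcon
      push_neg at hcon
      obtain ⟨c, hc, hcle⟩ := Statement3Aux.exists_minGen_le (hb i).2.1
      rw [Statement3Aux.face_iff] at hF
      refine hF c hc ?_
      rintro ⟨i', j⟩ hv
      rw [Finset.mem_filter] at hv
      have hj : (j : ℕ) < c i' := hv.2
      have hle := Finsupp.le_def.mp hcle i'
      by_cases hii : i' = i
      · subst hii; exact hcon j
      · rw [Finsupp.single_apply, if_neg (fun h => hii h.symm)] at hle
        omega
    have hex : ∀ i : Fin n, ∃ j : ℕ, ∃ h : j < b i, (⟨i, ⟨j, h⟩⟩ : PolVars n b) ∉ F := by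
      intro i
      obtain ⟨j, hj⟩ := hrow i
      exact ⟨j.1, j.2, hj⟩
    set a : Fin n →₀ ℕ := Finsupp.equivFunOnFinite.symm (fun i => Nat.find (hex i)) with ha_def
    have ha_apply : ∀ i, a i = Nat.find (hex i) := by
      intro i; simp [ha_def]
    have hspec : ∀ i, ∃ h : a i < b i, (⟨i, ⟨a i, h⟩⟩ : PolVars n b) ∉ F := by
      intro i
      rw [ha_apply]
      exact Nat.find_spec (hex i)
    have hminF : ∀ (i : Fin n) (j : Fin (b i)), (j : ℕ) < a i → (⟨i, j⟩ : PolVars n b) ∈ F := by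
      intro i j hj
      rw [ha_apply] at hj
      have := Nat.find_min (hex i) hj
      push_neg at this
      exact this j.2
    have hanotI : (monomial a (1 : K)) ∉ I := by
      intro hmem
      obtain ⟨c, hc, hcle⟩ := Statement3Aux.exists_minGen_le hmem
      rw [Statement3Aux.face_iff] at hF
      refine hF c hc ?_
      rintro ⟨i, j⟩ hv
      rw [Finset.mem_filter] at hv
      have hj : (j : ℕ) < c i := hv.2
      have hle := Finsupp.le_def.mp hcle i
      exact hminF i j (by omega)
    have hsub : F ⊆ Finset.univ.filter (fun v : PolVars n b => (v.2 : ℕ) ≠ a v.1) := by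
      rintro ⟨v1, v2⟩ hv
      rw [Finset.mem_filter]
      refine ⟨Finset.mem_univ _, ?_⟩
      intro heq
      obtain ⟨hlt, hnotin⟩ := hspec v1
      have hv2 : v2 = ⟨a v1, hlt⟩ := Fin.ext heq
      rw [hv2] at hv
      exact hnotin hv
    exact ⟨a, hanotI, hmax _ (face_of a hanotI) hsub⟩
  · rintro ⟨a, ha, rfl⟩
    refine ⟨face_of a ha, ?_⟩
    intro G hG hsub
    by_contra hne
    have hns : ¬ G ⊆ Finset.univ.filter (fun v : PolVars n b => (v.2 : ℕ) ≠ a v.1) :=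
      fun h => hne (Finset.Subset.antisymm hsub h)
    rw [Finset.not_subset] at hns
    obtain ⟨w, hwG, hwF⟩ := hns
    obtain ⟨w1, w2⟩ := w
    have hw2 : (w2 : ℕ) = a w1 := by
      rw [Finset.mem_filter] at hwF
      push_neg at hwF
      exact hwF (Finset.mem_univ _)
    set d : Fin n →₀ ℕ := a + Finsupp.single w1 (b w1) with hd_def
    have hdI : (monomial d (1 : K)) ∈ I :=
      Statement3Aux.mem_of_le (le_add_self) (hb w1).2.1
    obtain ⟨c, hc, hcle⟩ := Statement3Aux.exists_minGen_le hdI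
    rw [Statement3Aux.face_iff] at hG
    refine hG c hc ?_
    rintro ⟨i', j'⟩ hv
    rw [Finset.mem_filter] at hv
    have hj' : (j' : ℕ) < c i' := hv.2
    have hle := Finsupp.le_def.mp hcle i'
    rw [hd_def, Finsupp.add_apply, Finsupp.single_apply] at hle
    by_cases hii : i' = w1
    · subst hii
      by_cases hja : (j' : ℕ) = a i'
      · have hj'w2 : j' = w2 := Fin.ext (by rw [hja, hw2])
        rw [hj'w2]
        exact hwG
      · exact hsub (Finset.mem_filter.mpr ⟨Finset.mem_univ _, hja⟩)
    · rw [if_neg (fun h => hii h.symm)] at hle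
      refine hsub (Finset.mem_filter.mpr ⟨Finset.mem_univ _, ?_⟩)
      show (j' : ℕ) ≠ a i'
      omega

end
end

section
/- The ideal L(I) has linear quotients with respect to any total order ≤ on G(L(I)) extending the componentwise partial order; that is, for every u ∈ G(L(I)), the colon ideal ({v ∈ G(L(I)) : v < u}) : (u) is generated by a subset of the variables of S^℘. -/
open MvPolynomial

noncomputable section

section Aux
variable {K : Type} [Field K] {m : ℕ}

lemma prod_X_eq_monomial {σ : Type} [DecidableEq σ] (F : Finset σ) :
    (∏ v ∈ F, (X v : MvPolynomial σ K)) = monomial (∑ v ∈ F, Finsupp.single v 1) (1 : K) := by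
  classical
  induction F using Finset.induction_on with
  | empty => simp
  | insert a s h ih =>
    rw [Finset.prod_insert h, Finset.sum_insert h, ih, X, monomial_mul, one_mul]

/-- The exponent vector of `genL K b a`. -/
def eVec (b : Fin m → ℕ) (a : Fin m →₀ ℕ) : (PolVars m b →₀ ℕ) :=
  ∑ v ∈ Finset.univ.filter (fun v : PolVars m b => (v.2 : ℕ) = a v.1), Finsupp.single v 1

lemma eVec_apply (b : Fin m → ℕ) (a : Fin m →₀ ℕ) (w : PolVars m b) :
    eVec b a w = if (w.2 : ℕ) = a w.1 then 1 else 0 := by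
  classical
  rw [eVec, Finsupp.finset_sum_apply]
  simp_rw [Finsupp.single_apply]
  rw [Finset.sum_ite_eq' _ w]
  simp

lemma genL_eq (b : Fin m → ℕ) (a : Fin m →₀ ℕ) :
    genL K b a = monomial (eVec b a) (1 : K) := prod_X_eq_monomial _

/-- Monomials below a monomial not in `I` are not in `I`. -/
lemma not_mem_of_le {I : Ideal (MvPolynomial (Fin m) K)} {a a'' : Fin m →₀ ℕ}
    (h : a'' ≤ a) (ha : (monomial a (1 : K)) ∉ I) : (monomial a'' (1 : K)) ∉ I := by
  intro hmem
  apply ha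
  have : (monomial a (1 : K)) = monomial a'' (1 : K) * monomial (a - a'') (1 : K) := by
    rw [monomial_mul, one_mul, add_tsub_cancel_of_le h]
  rw [this]
  exact Ideal.mul_mem_right _ _ hmem

lemma lt_b_of_not_mem {b : Fin m → ℕ} {I : Ideal (MvPolynomial (Fin m) K)}
    (hI : ZeroDimData K b I) {a : Fin m →₀ ℕ}
    (ha : (monomial a (1 : K)) ∉ I) (i : Fin m) : a i < b i := by
  by_contra h
  push_neg at h
  have hle : Finsupp.single i (b i) ≤ a := by
    intro j
    rcases eq_or_ne i j with rfl | hj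
    · simpa using h
    · simp [Finsupp.single_apply, hj]
  exact not_mem_of_le hle ha (hI.2.2 i).2.1

end Aux

/-- The ideal `L(I)` has linear quotients with respect to any total order
on `G(L(I))` (equivalently, on its indexing set `Mon(S∖I)`) extending the componentwise
partial order: for every `u ∈ G(L(I))`, the colon ideal
`({v ∈ G(L(I)) : v < u}) : (u)` is generated by a subset of the variables of `S^℘`. -/
theorem statement5 {K : Type} [Field K] {n : ℕ} (b : Fin n → ℕ)
    (I : Ideal (MvPolynomial (Fin n) K)) (hI : ZeroDimData K b I)
    (r : (Fin n →₀ ℕ) → (Fin n →₀ ℕ) → Prop)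
    (hrefl : ∀ a, (monomial a (1 : K)) ∉ I → r a a)
    (hantisymm : ∀ a a', (monomial a (1 : K)) ∉ I → (monomial a' (1 : K)) ∉ I →
      r a a' → r a' a → a = a')
    (htrans : ∀ a a' a'', (monomial a (1 : K)) ∉ I → (monomial a' (1 : K)) ∉ I →
      (monomial a'' (1 : K)) ∉ I → r a a' → r a' a'' → r a a'')
    (htotal : ∀ a a', (monomial a (1 : K)) ∉ I → (monomial a' (1 : K)) ∉ I →
      r a a' ∨ r a' a)
    (hext : ∀ a a', (monomial a (1 : K)) ∉ I → (monomial a' (1 : K)) ∉ I →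
      (∀ i, a i ≤ a' i) → r a a') :
    ∀ a : Fin n →₀ ℕ, (monomial a (1 : K)) ∉ I →
      ∃ T : Set (PolVars n b),
        (Ideal.span (genL K b ''
            {a' | (monomial a' (1 : K)) ∉ I ∧ r a' a ∧ a' ≠ a})).colon
          (Ideal.span {genL K b a})
        = Ideal.span ((fun v => (X v : MvPolynomial (PolVars n b) K)) '' T) := by
  classical
  intro a ha
  set E : Set (Fin n →₀ ℕ) := {a' | (monomial a' (1 : K)) ∉ I ∧ r a' a ∧ a' ≠ a} with hE
  set J : Ideal (MvPolynomial (PolVars n b) K) := Ideal.span (genL K b '' E) with hJdef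
  refine ⟨{v | X v * genL K b a ∈ J}, le_antisymm ?_ ?_⟩
  · intro f hf
    rw [Ideal.mem_colon_span_singleton] at hf
    have hJeq : J = Ideal.span ((fun s => monomial s (1 : K)) '' (eVec b '' E)) := by
      rw [hJdef, Set.image_image]
      congr 1
      exact Set.image_congr fun a' _ => genL_eq b a'
    rw [hJeq, mem_ideal_span_monomial_image] at hf
    rw [mem_ideal_span_X_image]
    intro c hc
    have hsup : c + eVec b a ∈ (f * genL K b a).support := by
      rw [genL_eq, mem_support_iff, coeff_mul_monomial, mul_one]
      exact mem_support_iff.mp hc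
    obtain ⟨s, hs, hle⟩ := hf _ hsup
    obtain ⟨a', ha', rfl⟩ := hs
    obtain ⟨ha'I, hra', hne⟩ := ha'
    have hex : ∃ i, a' i < a i := by
      by_contra h
      push_neg at h
      exact hne (hantisymm a' a ha'I ha hra' (hext a a' ha ha'I h))
    obtain ⟨i, hi⟩ := hex
    have hbi : a' i < b i := lt_b_of_not_mem hI ha'I i
    have hai : a i < b i := lt_b_of_not_mem hI ha i
    refine ⟨⟨i, ⟨a' i, hbi⟩⟩, ?_, ?_⟩
    · show X (⟨i, ⟨a' i, hbi⟩⟩ : PolVars n b) * genL K b a ∈ J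
      set a'' : Fin n →₀ ℕ := a.update i (a' i) with ha''def
      have ha''app : ∀ j, a'' j = if j = i then a' i else a j := by
        intro j
        rw [ha''def]
        simp only [Finsupp.coe_update, Function.update_apply]
      have ha''le : a'' ≤ a := by
        intro j
        rw [ha''app]
        split_ifs with hj
        · subst hj; exact hi.le
        · exact le_rfl
      have ha''I : (monomial a'' (1 : K)) ∉ I := not_mem_of_le ha''le ha
      have ha''ne : a'' ≠ a := by
        intro h
        have := congrArg (fun g : Fin n →₀ ℕ => g i) h
        simp only [ha''app i, if_pos rfl] at this
        exact absurd this hi.ne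
      have hmem'' : genL K b a'' ∈ J := by
        rw [hJdef]
        exact Ideal.subset_span ⟨a'', ⟨ha''I, hext a'' a ha''I ha ha''le, ha''ne⟩, rfl⟩
      have key : X (⟨i, ⟨a' i, hbi⟩⟩ : PolVars n b) * genL K b a
          = X (⟨i, ⟨a i, hai⟩⟩ : PolVars n b) * genL K b a'' := by
        rw [genL_eq, genL_eq, X, monomial_mul, X, monomial_mul, one_mul]
        refine congrArg (fun d => monomial d (1 : K)) ?_
        ext w
        obtain ⟨w1, w2⟩ := w
        simp only [Finsupp.add_apply, Finsupp.single_apply, eVec_apply]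
        rcases eq_or_ne w1 i with h | h
        · subst h
          simp only [Sigma.mk.inj_iff, heq_eq_eq, true_and, Fin.ext_iff, Fin.val_mk,
            ha''app, if_pos rfl]
          split_ifs <;> omega
        · have h1 : (⟨i, ⟨a' i, hbi⟩⟩ : PolVars n b) ≠ ⟨w1, w2⟩ := by
            intro hcon; exact h (congrArg Sigma.fst hcon).symm
          have h2 : (⟨i, ⟨a i, hai⟩⟩ : PolVars n b) ≠ ⟨w1, w2⟩ := by
            intro hcon; exact h (congrArg Sigma.fst hcon).symm
          rw [if_neg h1, if_neg h2, ha''app, if_neg h]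
      rw [key]
      exact Ideal.mul_mem_left _ _ hmem''
    · set v₀ : PolVars n b := ⟨i, ⟨a' i, hbi⟩⟩ with hv₀
      have h1 : eVec b a' v₀ ≤ (c + eVec b a) v₀ := hle v₀
      have h2 : eVec b a' v₀ = 1 := by rw [eVec_apply, hv₀]; simp
      have h3 : eVec b a v₀ = 0 := by
        rw [eVec_apply, hv₀]
        simp [hi.ne]
      rw [Finsupp.add_apply, h2, h3] at h1
      omega
  · rw [Ideal.span_le]
    rintro x ⟨v, hv, rfl⟩
    rw [SetLike.mem_coe, Ideal.mem_colon_span_singleton]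
    exact hv

end
end

section
/- Let u = x_1^{a_1}⋯x_n^{a_n} ∈ Mon(S∖I) be such that x_i·u ∈ I for all i, and set I' = I + (u). Then the colon ideal L(I') : (x_{1,a_1+1}⋯x_{n,a_n+1}) equals the ideal (x_{1,1}, x_{1,2}, …, x_{1,a_1}, x_{2,1}, …, x_{2,a_2}, …, x_{n,1}, …, x_{n,a_n}) of S^℘; moreover L(I) = (L(I'), x_{1,a_1+1}⋯x_{n,a_n+1}). -/
open MvPolynomial

noncomputable section

namespace Statement6Aux

lemma mon_mem_span_iff {K : Type} [Field K] {m : ℕ} {A : Set (Fin m →₀ ℕ)} {c : Fin m →₀ ℕ} :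
    (monomial c (1 : K)) ∈ Ideal.span ((fun s => monomial s (1 : K)) '' A) ↔ ∃ s ∈ A, s ≤ c := by
  classical
  rw [mem_ideal_span_monomial_image]
  simp [support_monomial]

lemma mon_mem_of_le {K : Type} [Field K] {m : ℕ} {J : Ideal (MvPolynomial (Fin m) K)}
    {c c' : Fin m →₀ ℕ} (h : c ≤ c') (hc : (monomial c (1 : K)) ∈ J) :
    (monomial c' (1 : K)) ∈ J := by
  have he : (monomial c' (1 : K) : MvPolynomial (Fin m) K)
      = monomial c (1 : K) * monomial (c' - c) (1 : K) := by
    rw [monomial_mul, one_mul, add_tsub_cancel_of_le h]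
  rw [he]
  exact Ideal.mul_mem_right _ _ hc

noncomputable def eps {m : ℕ} (b : Fin m → ℕ) (a : Fin m →₀ ℕ) : PolVars m b →₀ ℕ :=
  ∑ v ∈ Finset.univ.filter (fun v : PolVars m b => (v.2 : ℕ) = a v.1), Finsupp.single v 1

lemma eps_apply {m : ℕ} (b : Fin m → ℕ) (a : Fin m →₀ ℕ) (u : PolVars m b) :
    eps b a u = if (u.2 : ℕ) = a u.1 then 1 else 0 := by
  classical
  rw [eps, Finset.sum_apply']
  simp only [Finsupp.single_apply, Finset.sum_ite_eq', Finset.mem_filter, Finset.mem_univ,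
    true_and]

lemma genL_eq (K : Type) [Field K] {m : ℕ} (b : Fin m → ℕ) (a : Fin m →₀ ℕ) :
    genL K b a = monomial (eps b a) (1 : K) := by
  rw [genL, eps, monomial_sum_one]
  exact Finset.prod_congr rfl fun v _ => rfl

end Statement6Aux

/-- Let `u = x^a ∈ Mon(S∖I)` be such that `x_i·u ∈ I` for all `i`, and set
`I' = I + (u)`.  Then `L(I') : (x_{1,a_1+1}⋯x_{n,a_n+1})` equals the ideal of `S^℘`
generated by the variables `x_{i,j}` with `1 ≤ j ≤ a_i`; moreover
`L(I) = (L(I'), x_{1,a_1+1}⋯x_{n,a_n+1})`. -/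
theorem statement6 {K : Type} [Field K] {n : ℕ} (b : Fin n → ℕ)
    (I : Ideal (MvPolynomial (Fin n) K)) (hI : ZeroDimData K b I)
    (a : Fin n →₀ ℕ) (ha : (monomial a (1 : K)) ∉ I)
    (hmax : ∀ i : Fin n, (monomial (a + Finsupp.single i 1) (1 : K)) ∈ I)
    (I' : Ideal (MvPolynomial (Fin n) K))
    (hI' : I' = I ⊔ Ideal.span {(monomial a (1 : K) : MvPolynomial (Fin n) K)}) :
    (LIdeal K b I').colon (Ideal.span {genL K b a})
      = Ideal.span ((fun v => (X v : MvPolynomial (PolVars n b) K)) ''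
          {v : PolVars n b | (v.2 : ℕ) < a v.1}) ∧
    LIdeal K b I = LIdeal K b I' ⊔ Ideal.span {genL K b a} := by
  classical
  obtain ⟨⟨A, hA⟩, hItop, hb⟩ := hI
  have memI : ∀ c : Fin n →₀ ℕ, (monomial c (1 : K)) ∈ I ↔ ∃ s ∈ A, s ≤ c := by
    intro c; rw [hA]; exact Statement6Aux.mon_mem_span_iff
  have hIle : I ≤ I' := by rw [hI']; exact le_sup_left
  have haI' : (monomial a (1 : K)) ∈ I' := by
    rw [hI']
    exact Ideal.mem_sup_right (Ideal.subset_span (Set.mem_singleton _))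
  have hAbove : ∀ c : Fin n →₀ ℕ, a ≤ c → c ≠ a → (monomial c (1 : K)) ∈ I := by
    intro c hle hne
    have hex : ∃ i, a i ≠ c i := by
      by_contra h; push_neg at h
      exact hne (Finsupp.ext fun i => (h i).symm)
    obtain ⟨i, hi⟩ := hex
    have hilt : a i < c i := lt_of_le_of_ne (hle i) hi
    refine Statement6Aux.mon_mem_of_le ?_ (hmax i)
    intro i'
    rw [Finsupp.add_apply, Finsupp.single_apply]
    by_cases h : i = i'
    · subst h; simpa using hilt
    · simpa [h] using hle i'
  have hkey : ∀ c : Fin n →₀ ℕ,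
      (monomial c (1 : K)) ∉ I' ↔ ((monomial c (1 : K)) ∉ I ∧ c ≠ a) := by
    intro c
    constructor
    · intro h
      refine ⟨fun hc => h (hIle hc), ?_⟩
      rintro rfl; exact h haI'
    · rintro ⟨h1, h2⟩ hc
      rw [hI', hA, ← Ideal.span_union,
        ← Set.image_singleton (f := fun s => monomial s (1 : K)), ← Set.image_union,
        Statement6Aux.mon_mem_span_iff] at hc
      obtain ⟨s, hs | hs, hsc⟩ := hc
      · exact h1 ((memI c).2 ⟨s, hs, hsc⟩)
      · rw [Set.mem_singleton_iff] at hs; subst hs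
        exact h1 (hAbove c hsc h2)
  have hblt : ∀ c : Fin n →₀ ℕ, (monomial c (1 : K)) ∉ I → ∀ i, c i < b i := by
    intro c hc i
    by_contra h; push_neg at h
    exact hc (Statement6Aux.mon_mem_of_le (Finsupp.single_le_iff.2 h) (hb i).2.1)
  have hltA : ∀ c : Fin n →₀ ℕ,
      (monomial c (1 : K)) ∉ I → c ≠ a → ∃ i, c i < a i := by
    intro c h1 h2
    by_contra h; push_neg at h
    exact h1 (hAbove c (fun i => h i) h2)
  have memL' : ∀ p : MvPolynomial (PolVars n b) K,
      p ∈ LIdeal K b I' ↔ ∀ m ∈ p.support, ∃ c : Fin n →₀ ℕ,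
        (monomial c (1 : K)) ∉ I' ∧ Statement6Aux.eps b c ≤ m := by
    intro p
    have himg : genL K b '' {c : Fin n →₀ ℕ | (monomial c (1 : K)) ∉ I'}
        = (fun e => monomial e (1 : K)) ''
          (Statement6Aux.eps b '' {c : Fin n →₀ ℕ | (monomial c (1 : K)) ∉ I'}) := by
      rw [Set.image_image]
      exact Set.image_congr fun c _ => Statement6Aux.genL_eq K b c
    rw [LIdeal, himg, mem_ideal_span_monomial_image]
    constructor <;> intro h m hm
    · obtain ⟨si, ⟨c, hc, rfl⟩, hle⟩ := h m hm; exact ⟨c, hc, hle⟩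
    · obtain ⟨c, hc, hle⟩ := h m hm; exact ⟨_, ⟨c, hc, rfl⟩, hle⟩
  constructor
  · apply le_antisymm
    · intro x hx
      rw [Ideal.mem_colon_span_singleton] at hx
      have hx' := (memL' _).1 hx
      rw [mem_ideal_span_X_image]
      intro m hm
      have hsup : m + Statement6Aux.eps b a ∈ (x * genL K b a).support := by
        rw [mem_support_iff, Statement6Aux.genL_eq, coeff_mul_monomial, mul_one]
        exact mem_support_iff.1 hm
      obtain ⟨c, hc, hle⟩ := hx' _ hsup
      obtain ⟨hcI, hca⟩ := (hkey c).1 hc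
      obtain ⟨i, hi⟩ := hltA c hcI hca
      refine ⟨⟨i, ⟨c i, hblt c hcI i⟩⟩, hi, ?_⟩
      have h1 := hle ⟨i, ⟨c i, hblt c hcI i⟩⟩
      rw [Statement6Aux.eps_apply] at h1
      simp only [Finsupp.add_apply, Statement6Aux.eps_apply] at h1
      rw [if_pos trivial, if_neg (Nat.ne_of_lt hi)] at h1
      omega
    · rw [Ideal.span_le]
      rintro _ ⟨v, hv, rfl⟩
      rw [SetLike.mem_coe, Ideal.mem_colon_span_singleton]
      obtain ⟨i, j⟩ := v
      set c : Fin n →₀ ℕ := Finsupp.update a i (j : ℕ) with hcdef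
      have hci : c i = (j : ℕ) := by
        simp [hcdef, Finsupp.coe_update]
      have hci' : ∀ i', i' ≠ i → c i' = a i' := by
        intro i' h
        simp [hcdef, Finsupp.coe_update, Function.update_apply, h]
      have hvi : (j : ℕ) < a i := hv
      have hcle : c ≤ a := by
        intro i'
        by_cases h : i' = i
        · subst h; rw [hci]; exact le_of_lt hvi
        · rw [hci' i' h]
      have hcne : c ≠ a := by
        intro h; rw [h] at hci; omega
      have hcI' : (monomial c (1 : K)) ∉ I' :=
        (hkey c).2 ⟨fun hmem => ha (Statement6Aux.mon_mem_of_le hcle hmem), hcne⟩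
      rw [memL' _]
      intro m hm
      refine ⟨c, hcI', ?_⟩
      have hXe : (X (⟨i, j⟩ : PolVars n b) : MvPolynomial (PolVars n b) K) * genL K b a
          = monomial (Finsupp.single (⟨i, j⟩ : PolVars n b) 1 + Statement6Aux.eps b a)
              (1 : K) := by
        rw [Statement6Aux.genL_eq,
          show (X (⟨i, j⟩ : PolVars n b) : MvPolynomial (PolVars n b) K)
            = monomial (Finsupp.single (⟨i, j⟩ : PolVars n b) 1) (1 : K) from rfl,
          monomial_mul, one_mul]
      rw [hXe, support_monomial, if_neg one_ne_zero, Finset.mem_singleton] at hm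
      subst hm
      rw [Finsupp.le_def]
      rintro ⟨i', j'⟩
      rw [Statement6Aux.eps_apply]
      dsimp only
      split_ifs with h
      · rw [Finsupp.add_apply, Statement6Aux.eps_apply]
        by_cases h' : i' = i
        · subst h'
          rw [hci] at h
          have hj : j' = j := Fin.ext h
          subst hj
          simp [Finsupp.single_apply]
        · rw [hci' i' h'] at h
          dsimp only
          rw [if_pos h]
          omega
      · exact Nat.zero_le _
  · have hset : {c : Fin n →₀ ℕ | (monomial c (1 : K)) ∉ I}
        = {c : Fin n →₀ ℕ | (monomial c (1 : K)) ∉ I'} ∪ {a} := by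
      ext c
      simp only [Set.mem_setOf_eq, Set.mem_union, Set.mem_singleton_iff, hkey]
      constructor
      · intro h
        by_cases hc : c = a
        · exact Or.inr hc
        · exact Or.inl ⟨h, hc⟩
      · rintro (⟨h, _⟩ | rfl)
        · exact h
        · exact ha
    rw [LIdeal, LIdeal, hset, Set.image_union, Set.image_singleton, Ideal.span_union]

end
end
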